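/- Let b ≥ β > 0 and let f : 𝔻 → ℝ be defined by f(r·e^{iθ}) = (1/(r(1−r)^{b−β}))·sin(1/(1−r)^b) for 1/2 ≤ r < 1 and f(r·e^{iθ}) = 1 for 0 ≤ r < 1/2. Then there exists a constant C > 0 such that for every z = r·e^{iθ} ∈ 𝔻 with 1/2 ≤ r < 1 and every ζ ∈ B(z), one has |∫_{B(z,ζ)} f dA| ≤ C·(1−r)^{2+β}. -/

import Mathlib

open MeasureTheory Set

noncomputable section

/-- The normalized area measure on the plane: planar Lebesgue measure divided by `π`. -/
def dA : Measure ℂ := (ENNReal.ofReal Real.pi)⁻¹ • volume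

/-- The open unit disc `𝔻`. -/
def unitDisc : Set ℂ := {z : ℂ | ‖z‖ < 1}

/-- The argument `θ` of `z`, normalized to lie in `[0, 2π)`. -/
def theta (z : ℂ) : ℝ := toIcoMod Real.two_pi_pos 0 (Complex.arg z)

/-- The angle of `ζ`, normalized to lie in `[theta z, theta z + 2π)`;
for `ζ ∈ B(z)` this is the angle `θ̃ ∈ [θ, θ + π(1-r)]` of the paper's convention. -/
def angFrom (z ζ : ℂ) : ℝ := toIcoMod Real.two_pi_pos (theta z) (Complex.arg ζ)

/-- The polar rectangle `{ρ e^{iφ} : r₁ ≤ ρ ≤ r₂, φ₁ ≤ φ ≤ φ₂}`. -/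
def polarRect (r₁ r₂ φ₁ φ₂ : ℝ) : Set ℂ :=
  {w : ℂ | ∃ ρ φ : ℝ, r₁ ≤ ρ ∧ ρ ≤ r₂ ∧ φ₁ ≤ φ ∧ φ ≤ φ₂ ∧
    w = (ρ : ℂ) * Complex.exp ((φ : ℂ) * Complex.I)}

/-- The set `B(z)` for `z = r e^{iθ} ∈ 𝔻`. -/
def Bz (z : ℂ) : Set ℂ :=
  polarRect ‖z‖ (1 - (1 - ‖z‖) / 2) (theta z) (theta z + Real.pi * (1 - ‖z‖))

/-- The set `B(z, ζ)` for `ζ ∈ B(z)`. -/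
def Bzz (z ζ : ℂ) : Set ℂ := polarRect ‖z‖ ‖ζ‖ (theta z) (angFrom z ζ)

/-- The set `B(ζ₁, ζ₂)` for points `ζ₁ ≾ ζ₂` of `B(z)`. -/
def Bsub (z ζ₁ ζ₂ : ℂ) : Set ℂ := polarRect ‖ζ₁‖ ‖ζ₂‖ (angFrom z ζ₁) (angFrom z ζ₂)

/-- The relation `ζ₁ ≾ ζ₂` for points of `B(z)`: `ρ₁ ≤ ρ₂` and `φ₁ ≤ φ₂`. -/
def precSim (z ζ₁ ζ₂ : ℂ) : Prop := ‖ζ₁‖ ≤ ‖ζ₂‖ ∧ angFrom z ζ₁ ≤ angFrom z ζ₂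

/-- The average `f̂_K = (1/|K|) ∫_K f dA` of `f` over a set `K`. -/
def avgOn (f : ℂ → ℂ) (K : Set ℂ) : ℂ := ((dA K).toReal)⁻¹ • ∫ w in K, f w ∂dA

/-- The average function `f̂(z) = f̂_{B(z)}`. -/
def avg (f : ℂ → ℂ) (z : ℂ) : ℂ := avgOn f (Bz z)

/-- The quantity `(1/|B(z)|) |∫_{B(z,ζ)} (f(ξ) - f̂(z)) dA(ξ)|`. -/
def wQuot (f : ℂ → ℂ) (z ζ : ℂ) : ℝ :=
  ((dA (Bz z)).toReal)⁻¹ * ‖∫ ξ in Bzz z ζ, (f ξ - avg f z) ∂dA‖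

/-- The BWMO condition: `‖f‖_BWMO < ∞`. -/
def IsBWMO (f : ℂ → ℂ) : Prop := ∃ C : ℝ, ∀ z ∈ unitDisc, ∀ ζ ∈ Bz z, wQuot f z ζ ≤ C

/-- The BWMO seminorm `‖f‖_BWMO`. -/
def bwmoNorm (f : ℂ → ℂ) : ℝ :=
  sSup {c : ℝ | ∃ z ∈ unitDisc, ∃ ζ ∈ Bz z, c = wQuot f z ζ}

/-- The VWMO condition:
`(1/|B(z)|) sup_{ζ ∈ B(z)} |∫_{B(z,ζ)} (f - f̂(z)) dA| → 0` as `|z| → 1`. -/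
def IsVWMO (f : ℂ → ℂ) : Prop :=
  ∀ ε > (0:ℝ), ∃ r₀ < (1:ℝ), ∀ z ∈ unitDisc, r₀ ≤ ‖z‖ → ∀ ζ ∈ Bz z, wQuot f z ζ ≤ ε

/-- The Bergman-metric disc `D(z,1)` of radius `1` centered at `z`. -/
def Dball (z : ℂ) : Set ℂ :=
  {w : ℂ | ‖w‖ < 1 ∧ ‖(z - w) / (1 - (starRingEnd ℂ) w * z)‖ < Real.tanh 1}

/-- The hyperbolic average `f̂₁(z) = (1/|D(z,1)|) ∫_{D(z,1)} f dA` of a real-valued `f`. -/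
def avg1 (f : ℂ → ℝ) (z : ℂ) : ℝ := ((dA (Dball z)).toReal)⁻¹ * ∫ w in Dball z, f w ∂dA

/-- The mean oscillation `(1/|D(z,1)|) ∫_{D(z,1)} |f - f̂₁(z)| dA` of a real-valued `f`. -/
def meanOsc1 (f : ℂ → ℝ) (z : ℂ) : ℝ :=
  ((dA (Dball z)).toReal)⁻¹ * ∫ ξ in Dball z, |f ξ - avg1 f z| ∂dA

/-- The Berezin transform `f̃(z) = ∫_𝔻 f(w) |k_z(w)|² dA(w)`,
where `k_z(w) = (1-|z|²)/(1-w z̄)²`. -/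
def berezin (f : ℂ → ℂ) (z : ℂ) : ℂ :=
  ∫ w in unitDisc, f w * ((((1 - ‖z‖ ^ 2) ^ 2 / ‖1 - w * (starRingEnd ℂ) z‖ ^ 4 : ℝ)) : ℂ) ∂dA

/-- The example symbol of Section 4:
`f(r e^{iθ}) = (1/(r (1-r)^{b-β})) sin(1/(1-r)^b)` for `r ≥ 1/2`, and `1` for `r < 1/2`. -/
def fEx (b β : ℝ) (z : ℂ) : ℝ :=
  if ‖z‖ < 1 / 2 then 1
  else (1 / (‖z‖ * (1 - ‖z‖) ^ (b - β))) * Real.sin (1 / (1 - ‖z‖) ^ b)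

end


section Aux
open MeasureTheory Set intervalIntegral Real

lemma hasDerivAt_G (b β : ℝ) {t : ℝ} (ht : 0 < t) :
    HasDerivAt (fun t : ℝ => t ^ (β+1) * Real.cos (1 / t ^ b))
      ((β+1) * t ^ β * Real.cos (1 / t ^ b)
        + b * (Real.sin (1 / t ^ b) * t ^ (β - b))) t := by
  have h1 : HasDerivAt (fun t : ℝ => t ^ (β+1)) ((β+1) * t ^ β) t := by
    have := Real.hasDerivAt_rpow_const (x := t) (p := β+1) (Or.inl ht.ne')
    simpa using this
  have h2 : HasDerivAt (fun t : ℝ => 1 / t ^ b) (-b * t ^ (-b - 1)) t := by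
    have h : HasDerivAt (fun t : ℝ => t ^ (-b)) (-b * t ^ (-b - 1)) t :=
      Real.hasDerivAt_rpow_const (x := t) (p := -b) (Or.inl ht.ne')
    refine h.congr_of_eventuallyEq ?_
    filter_upwards [eventually_gt_nhds ht] with x hx
    rw [Real.rpow_neg hx.le, one_div]
  have h3 : HasDerivAt (fun t : ℝ => Real.cos (1 / t ^ b))
      (-Real.sin (1 / t ^ b) * (-b * t ^ (-b - 1))) t := (Real.hasDerivAt_cos _).comp t h2
  have : HasDerivAt (fun t : ℝ => t ^ (β+1) * Real.cos (1 / t ^ b))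
      ((β+1) * t ^ β * Real.cos (1 / t ^ b)
        + t ^ (β+1) * (-Real.sin (1 / t ^ b) * (-b * t ^ (-b - 1)))) t := h1.mul h3
  convert this using 1
  rw [show t ^ (β-b) = t ^ (β+1) * t ^ (-b-1) from by rw [← Real.rpow_add ht]; ring_nf]
  ring

lemma contOn_rpow (p : ℝ) {s : Set ℝ} (hs : ∀ x ∈ s, 0 < x) :
    ContinuousOn (fun t : ℝ => t ^ p) s := fun x hx =>
  (Real.continuousAt_rpow_const x p (Or.inl (hs x hx).ne')).continuousWithinAt

lemma contOn_osc (b : ℝ) {s : Set ℝ} (hs : ∀ x ∈ s, 0 < x) :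
    ContinuousOn (fun t : ℝ => 1 / t ^ b) s :=
  continuousOn_const.div (contOn_rpow b hs) (fun x hx => (Real.rpow_pos_of_pos (hs x hx) b).ne')

lemma oscillatory_bound (b β : ℝ) (hb : 0 < b) (hβ : 0 < β) {a c : ℝ}
    (ha : 0 < a) (hac : a ≤ c) :
    |∫ t in a..c, Real.sin (1 / t ^ b) * t ^ (β - b)| ≤ ((β + 3) / b) * c ^ (β + 1) := by
  have hc : 0 < c := lt_of_lt_of_le ha hac
  have hpos : ∀ x ∈ Set.Icc a c, (0:ℝ) < x := fun x hx => lt_of_lt_of_le ha hx.1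
  have hcontA : ContinuousOn (fun t : ℝ => (β+1) * t ^ β * Real.cos (1 / t ^ b)) (Set.Icc a c) :=
    ((continuousOn_const.mul (contOn_rpow β hpos)).mul
      (Real.continuous_cos.comp_continuousOn (contOn_osc b hpos)))
  have hcontg : ContinuousOn (fun t : ℝ => Real.sin (1 / t ^ b) * t ^ (β - b)) (Set.Icc a c) :=
    (Real.continuous_sin.comp_continuousOn (contOn_osc b hpos)).mul (contOn_rpow _ hpos)
  have hiA : IntervalIntegrable (fun t : ℝ => (β+1) * t ^ β * Real.cos (1 / t ^ b))
      volume a c := by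
    rw [intervalIntegrable_iff_integrableOn_Icc_of_le hac]
    exact hcontA.integrableOn_compact isCompact_Icc
  have hig : IntervalIntegrable (fun t : ℝ => Real.sin (1 / t ^ b) * t ^ (β - b))
      volume a c := by
    rw [intervalIntegrable_iff_integrableOn_Icc_of_le hac]
    exact hcontg.integrableOn_compact isCompact_Icc
  have hftc : ∫ t in a..c, ((β+1) * t ^ β * Real.cos (1 / t ^ b)
        + b * (Real.sin (1 / t ^ b) * t ^ (β - b)))
      = c ^ (β+1) * Real.cos (1 / c ^ b) - a ^ (β+1) * Real.cos (1 / a ^ b) := by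
    refine intervalIntegral.integral_eq_sub_of_hasDerivAt (f := fun t => t ^ (β+1) * Real.cos (1 / t ^ b)) (fun t ht => ?_) ?_
    · rw [Set.uIcc_of_le hac] at ht
      exact hasDerivAt_G b β (hpos t ht)
    · refine hiA.add ?_
      exact (hig.const_mul b)
  have hsplit : ∫ t in a..c, ((β+1) * t ^ β * Real.cos (1 / t ^ b)
        + b * (Real.sin (1 / t ^ b) * t ^ (β - b)))
      = (∫ t in a..c, (β+1) * t ^ β * Real.cos (1 / t ^ b))
        + b * ∫ t in a..c, Real.sin (1 / t ^ b) * t ^ (β - b) := by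
    rw [intervalIntegral.integral_add hiA (hig.const_mul b),
      intervalIntegral.integral_const_mul]
  have hcb1 : (0:ℝ) ≤ c ^ (β+1) := (Real.rpow_pos_of_pos hc _).le
  have hGc : |c ^ (β+1) * Real.cos (1 / c ^ b)| ≤ c ^ (β+1) := by
    rw [abs_mul, abs_of_nonneg hcb1]
    calc c ^ (β+1) * |Real.cos (1 / c ^ b)| ≤ c ^ (β+1) * 1 :=
        mul_le_mul_of_nonneg_left (Real.abs_cos_le_one _) hcb1
      _ = c ^ (β+1) := mul_one _
  have hGa : |a ^ (β+1) * Real.cos (1 / a ^ b)| ≤ c ^ (β+1) := by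
    rw [abs_mul, abs_of_nonneg (Real.rpow_pos_of_pos ha _).le]
    calc a ^ (β+1) * |Real.cos (1 / a ^ b)| ≤ a ^ (β+1) * 1 :=
        mul_le_mul_of_nonneg_left (Real.abs_cos_le_one _) (Real.rpow_pos_of_pos ha _).le
      _ = a ^ (β+1) := mul_one _
      _ ≤ c ^ (β+1) := Real.rpow_le_rpow ha.le hac (by linarith)
  have hAbound : |∫ t in a..c, (β+1) * t ^ β * Real.cos (1 / t ^ b)| ≤ (β+1) * c ^ (β+1) := by
    have h1 : ∀ x ∈ Set.uIoc a c, ‖(β+1) * x ^ β * Real.cos (1 / x ^ b)‖ ≤ (β+1) * c ^ β := by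
      intro x hx
      rw [Set.uIoc_of_le hac] at hx
      have hx0 : 0 < x := lt_of_lt_of_le ha hx.1.le
      rw [Real.norm_eq_abs, abs_mul, abs_mul, abs_of_nonneg (by linarith : (0:ℝ) ≤ β+1),
        abs_of_nonneg (Real.rpow_pos_of_pos hx0 β).le]
      calc (β+1) * x ^ β * |Real.cos (1 / x ^ b)| ≤ (β+1) * x ^ β * 1 :=
          mul_le_mul_of_nonneg_left (Real.abs_cos_le_one _)
            (by positivity)
        _ = (β+1) * x ^ β := mul_one _
        _ ≤ (β+1) * c ^ β := by
            have := Real.rpow_le_rpow hx0.le hx.2 hβ.le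
            nlinarith
    have := intervalIntegral.norm_integral_le_of_norm_le_const h1
    rw [Real.norm_eq_abs] at this
    calc |∫ t in a..c, (β+1) * t ^ β * Real.cos (1 / t ^ b)|
        ≤ (β+1) * c ^ β * |c - a| := this
      _ ≤ (β+1) * c ^ β * c := by
          apply mul_le_mul_of_nonneg_left _ (by positivity)
          rw [abs_of_nonneg (by linarith)]; linarith
      _ = (β+1) * c ^ (β+1) := by rw [mul_assoc, ← Real.rpow_add_one hc.ne']
  -- combine
  have key : |b * ∫ t in a..c, Real.sin (1 / t ^ b) * t ^ (β - b)| ≤ (β+3) * c ^ (β+1) := by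
    have : b * ∫ t in a..c, Real.sin (1 / t ^ b) * t ^ (β - b)
        = (c ^ (β+1) * Real.cos (1 / c ^ b) - a ^ (β+1) * Real.cos (1 / a ^ b))
          - ∫ t in a..c, (β+1) * t ^ β * Real.cos (1 / t ^ b) := by
      rw [← hftc, hsplit]; ring
    rw [this, abs_le]
    obtain ⟨h1l, h1r⟩ := abs_le.mp hGc
    obtain ⟨h2l, h2r⟩ := abs_le.mp hGa
    obtain ⟨h3l, h3r⟩ := abs_le.mp hAbound
    constructor <;> nlinarith [hcb1]
  rw [div_mul_eq_mul_div, le_div_iff₀ hb]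
  calc |∫ t in a..c, Real.sin (1 / t ^ b) * t ^ (β - b)| * b
      = |b * ∫ t in a..c, Real.sin (1 / t ^ b) * t ^ (β - b)| := by
        rw [abs_mul, abs_of_pos hb]; ring
    _ ≤ (β+3) * c ^ (β+1) := key

lemma polarRect_eq_image (r₁ r₂ φ₁ φ₂ : ℝ) :
    polarRect r₁ r₂ φ₁ φ₂ =
      (fun p : ℝ × ℝ => (p.1 : ℂ) * Complex.exp ((p.2 : ℂ) * Complex.I)) ''
        (Icc r₁ r₂ ×ˢ Icc φ₁ φ₂) := by
  ext w
  constructor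
  · rintro ⟨ρ, φ, h1, h2, h3, h4, rfl⟩
    exact ⟨(ρ, φ), ⟨⟨h1, h2⟩, ⟨h3, h4⟩⟩, rfl⟩
  · rintro ⟨⟨ρ, φ⟩, ⟨⟨h1, h2⟩, ⟨h3, h4⟩⟩, rfl⟩
    exact ⟨ρ, φ, h1, h2, h3, h4, rfl⟩

lemma measurableSet_polarRect (r₁ r₂ φ₁ φ₂ : ℝ) :
    MeasurableSet (polarRect r₁ r₂ φ₁ φ₂) := by
  rw [polarRect_eq_image]
  refine IsCompact.measurableSet ?_
  refine (isCompact_Icc.prod isCompact_Icc).image ?_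
  exact (Complex.continuous_ofReal.comp continuous_fst).mul
    (Complex.continuous_exp.comp ((Complex.continuous_ofReal.comp continuous_snd).mul
      continuous_const))

lemma norm_mul_exp (ρ φ : ℝ) (hρ : 0 ≤ ρ) :
    ‖(ρ : ℂ) * Complex.exp ((φ : ℂ) * Complex.I)‖ = ρ := by
  rw [norm_mul, Complex.norm_real, Real.norm_eq_abs,
    Complex.norm_exp_ofReal_mul_I, abs_of_nonneg hρ, mul_one]

lemma arg_mul_exp {ρ φ : ℝ} (hρ : 0 < ρ) (h1 : -π < φ) (h2 : φ ≤ π) :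
    Complex.arg ((ρ : ℂ) * Complex.exp ((φ : ℂ) * Complex.I)) = φ := by
  rw [Complex.arg_real_mul _ hρ, Complex.arg_exp_mul_I]
  rw [toIocMod_eq_self]
  exact ⟨h1, by linarith⟩

/-- Integral of a radial function over a polar sector based at angle `0`. -/
lemma integral_radial_polarRect (G : ℝ → ℝ) {r₁ r₂ Δ : ℝ}
    (h1 : 0 < r₁) (h12 : r₁ ≤ r₂) (hΔ0 : 0 ≤ Δ) (hΔπ : Δ < π)
    (hG : ContinuousOn G (Icc r₁ r₂)) :
    ∫ w in polarRect r₁ r₂ 0 Δ, G ‖w‖ = Δ * ∫ ρ in r₁..r₂, ρ * G ρ := by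
  set S := polarRect r₁ r₂ 0 Δ with hS
  set R : Set (ℝ × ℝ) := Icc r₁ r₂ ×ˢ Icc 0 Δ with hR
  have hRsub : R ⊆ polarCoord.target := by
    rintro ⟨x, y⟩ ⟨hx, hy⟩
    refine ⟨lt_of_lt_of_le h1 hx.1, ?_, lt_of_le_of_lt hy.2 hΔπ⟩
    have := Real.pi_pos
    simp only [mem_Icc] at hy
    linarith [hy.1]
  have hmem : ∀ p ∈ polarCoord.target, (Complex.polarCoord.symm p ∈ S ↔ p ∈ R) := by
    rintro ⟨x, y⟩ hp
    obtain ⟨hx, hy⟩ := hp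
    simp only [mem_Ioi] at hx
    constructor
    · rintro ⟨ρ, φ, hρ1, hρ2, hφ1, hφ2, heq⟩
      have hρpos : 0 < ρ := lt_of_lt_of_le h1 hρ1
      have hri := Complex.polarCoord.right_inv (x := (x, y)) ⟨hx, hy⟩
      rw [Complex.polarCoord_apply, heq] at hri
      have habs : ‖(ρ : ℂ) * Complex.exp ((φ : ℂ) * Complex.I)‖ = ρ := by
        exact norm_mul_exp ρ φ hρpos.le
      have harg : Complex.arg ((ρ : ℂ) * Complex.exp ((φ : ℂ) * Complex.I)) = φ := by
        refine arg_mul_exp hρpos ?_ ?_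
        · linarith [Real.pi_pos]
        · linarith [hφ2.trans hΔπ.le]
      rw [habs, harg] at hri
      obtain ⟨h1', h2'⟩ := Prod.mk.injEq .. ▸ hri
      exact ⟨⟨h1' ▸ hρ1, h1' ▸ hρ2⟩, ⟨h2' ▸ hφ1, h2' ▸ hφ2⟩⟩
    · rintro ⟨hx', hy'⟩
      refine ⟨x, y, hx'.1, hx'.2, hy'.1, hy'.2, ?_⟩
      simp only [Complex.polarCoord_symm_apply]
      rw [Complex.exp_mul_I]
      push_cast
      ring
  have hnorm : ∀ p ∈ R, ‖Complex.polarCoord.symm p‖ = p.1 := by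
    rintro ⟨x, y⟩ ⟨hx, _⟩
    rw [Complex.norm_polarCoord_symm,
      abs_of_pos (lt_of_lt_of_le h1 hx.1)]
  have hSm : MeasurableSet S := measurableSet_polarRect _ _ _ _
  have hRm : MeasurableSet R := measurableSet_Icc.prod measurableSet_Icc
  calc ∫ w in S, G ‖w‖
      = ∫ w, S.indicator (fun w => G ‖w‖) w := (MeasureTheory.integral_indicator hSm).symm
    _ = ∫ p in polarCoord.target, p.1 • S.indicator (fun w => G ‖w‖)
          (Complex.polarCoord.symm p) :=
        (Complex.integral_comp_polarCoord_symm (fun w => S.indicator (fun w => G ‖w‖) w)).symm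
    _ = ∫ p in polarCoord.target, R.indicator (fun q : ℝ × ℝ => q.1 * G q.1) p := by
        refine setIntegral_congr_fun polarCoord.open_target.measurableSet (fun p hp => ?_)
        by_cases hpR : p ∈ R
        · rw [indicator_of_mem ((hmem p hp).mpr hpR), indicator_of_mem hpR, hnorm p hpR,
            smul_eq_mul]
        · rw [indicator_of_notMem (fun hin => hpR ((hmem p hp).mp hin)),
            indicator_of_notMem hpR, smul_zero]
    _ = ∫ p in polarCoord.target ∩ R, (fun q : ℝ × ℝ => q.1 * G q.1) p :=
        setIntegral_indicator hRm
    _ = ∫ p in R, (fun q : ℝ × ℝ => q.1 * G q.1) p := by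
        rw [inter_eq_self_of_subset_right hRsub]
    _ = (∫ x in Icc r₁ r₂, x * G x) * ∫ y in Icc 0 Δ, (1:ℝ) := by
        rw [hR, Measure.volume_eq_prod]
        simpa using setIntegral_prod_mul (μ := (volume : Measure ℝ))
          (ν := (volume : Measure ℝ)) (fun x => x * G x) (fun _ => (1:ℝ))
          (Icc r₁ r₂) (Icc 0 Δ)
    _ = Δ * ∫ ρ in r₁..r₂, ρ * G ρ := by
        rw [setIntegral_const, smul_eq_mul, mul_one, measureReal_def, Real.volume_Icc,
          ENNReal.toReal_ofReal (by linarith), sub_zero,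
          MeasureTheory.integral_Icc_eq_integral_Ioc,
          ← intervalIntegral.integral_of_le h12, mul_comm]

/-- Rotation invariance: integral of a radial function over a rotated sector. -/
lemma integral_radial_polarRect_rotate (G : ℝ → ℝ) (r₁ r₂ θ Δ : ℝ) :
    ∫ w in polarRect r₁ r₂ θ (θ + Δ), G ‖w‖ = ∫ w in polarRect r₁ r₂ 0 Δ, G ‖w‖ := by
  set e : ℂ ≃ₗᵢ[ℝ] ℂ := rotation (Circle.exp θ) with he
  have hmp : MeasurePreserving e := e.measurePreserving
  have hemb : MeasurableEmbedding e := e.toHomeomorph.measurableEmbedding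
  have hset : ⇑e ⁻¹' polarRect r₁ r₂ θ (θ + Δ) = polarRect r₁ r₂ 0 Δ := by
    ext x
    simp only [mem_preimage, he, rotation_apply]
    constructor
    · rintro ⟨ρ, φ, h1, h2, h3, h4, heq⟩
      refine ⟨ρ, φ - θ, h1, h2, by linarith, by linarith, ?_⟩
      have hne : (Circle.exp θ : ℂ) ≠ 0 := Circle.coe_ne_zero _
      apply mul_left_cancel₀ hne
      rw [heq, Circle.coe_exp, ← mul_assoc, mul_comm (Complex.exp _) (ρ:ℂ), mul_assoc,
        ← Complex.exp_add]
      congr 1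
      push_cast
      ring
    · rintro ⟨ρ, ψ, h1, h2, h3, h4, rfl⟩
      refine ⟨ρ, ψ + θ, h1, h2, by linarith, by linarith, ?_⟩
      rw [Circle.coe_exp, ← mul_assoc, mul_comm (Complex.exp _) (ρ:ℂ), mul_assoc,
        ← Complex.exp_add]
      congr 2
      push_cast
      ring
  calc ∫ w in polarRect r₁ r₂ θ (θ + Δ), G ‖w‖
      = ∫ x in ⇑e ⁻¹' polarRect r₁ r₂ θ (θ + Δ), G ‖e x‖ :=
        (hmp.setIntegral_preimage_emb hemb (fun w => G ‖w‖) _).symm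
    _ = ∫ w in polarRect r₁ r₂ 0 Δ, G ‖w‖ := by
        rw [hset]
        refine setIntegral_congr_fun (measurableSet_polarRect _ _ _ _) (fun x _ => ?_)
        rw [e.norm_map]

end Aux

/-- For `b ≥ β > 0` and the example symbol `f = fEx b β`, there is a
constant `C > 0` such that for every `z = r e^{iθ} ∈ 𝔻` with `r ≥ 1/2` and every
`ζ ∈ B(z)`, `|∫_{B(z,ζ)} f dA| ≤ C (1-r)^{2+β}`. -/
theorem example_integral_bound (b β : ℝ) (hβ : 0 < β) (hbβ : β ≤ b) :
    ∃ C > (0:ℝ), ∀ z : ℂ, 1 / 2 ≤ ‖z‖ → ‖z‖ < 1 → ∀ ζ ∈ Bz z,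
      |∫ ξ in Bzz z ζ, fEx b β ξ ∂dA| ≤ C * (1 - ‖z‖) ^ (2 + β) := by
  have hb : 0 < b := lt_of_lt_of_le hβ hbβ
  have hπ := Real.pi_pos
  refine ⟨(β + 3) / b, by positivity, ?_⟩
  intro z h12 hr1 ζ hζ
  set r := ‖z‖ with hrdef
  set θ := theta z with hθdef
  have hr0 : (0:ℝ) < r := lt_of_lt_of_le (by norm_num) h12
  obtain ⟨ρ, φ, hρ1, hρ2, hφ1, hφ2, hζeq⟩ := hζ
  have hρpos : 0 < ρ := lt_of_lt_of_le hr0 hρ1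
  have hρlt1 : ρ < 1 := by linarith
  have hζnorm : ‖ζ‖ = ρ := by rw [hζeq]; exact norm_mul_exp ρ φ hρpos.le
  have hang : angFrom z ζ = φ := by
    rw [angFrom, toIcoMod_eq_iff Real.two_pi_pos]
    refine ⟨⟨hφ1, ?_⟩, ?_⟩
    · have h1 : Real.pi * (1 - r) ≤ Real.pi * 1 := by nlinarith
      linarith
    · rw [hζeq, Complex.arg_real_mul _ hρpos, Complex.arg_exp_mul_I]
      refine ⟨-(toIocDiv (mul_pos two_pos Real.pi_pos) (-Real.pi) φ), ?_⟩
      have h := toIocMod_add_toIocDiv_zsmul (mul_pos two_pos Real.pi_pos) (-Real.pi) φ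
      rw [neg_smul]
      linarith
  set Δ := φ - θ with hΔdef
  have hΔ0 : 0 ≤ Δ := by simp only [hΔdef]; linarith
  have hΔle : Δ ≤ Real.pi * (1 - r) := by simp only [hΔdef]; linarith
  have hΔπ : Δ < Real.pi := by nlinarith
  have hBzz : Bzz z ζ = polarRect r ρ θ (θ + Δ) := by
    rw [Bzz, hζnorm, hang, ← hrdef, ← hθdef]
    congr 1
    simp only [hΔdef]; ring
  set G : ℝ → ℝ := fun s =>
    if s < 1 / 2 then 1
    else (1 / (s * (1 - s) ^ (b - β))) * Real.sin (1 / (1 - s) ^ b) with hGdef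
  have hfEx : ∀ ξ : ℂ, fEx b β ξ = G ‖ξ‖ := fun ξ => by rw [hGdef]; rfl
  have hdA : ∫ ξ in Bzz z ζ, fEx b β ξ ∂dA
      = (Real.pi)⁻¹ * ∫ ξ in Bzz z ζ, fEx b β ξ := by
    rw [dA, Measure.restrict_smul, integral_smul_measure, ENNReal.toReal_inv,
      ENNReal.toReal_ofReal Real.pi_pos.le, smul_eq_mul]
  have hGcont : ContinuousOn G (Set.Icc r ρ) := by
    have h1s : ∀ s ∈ Set.Icc r ρ, (0:ℝ) < 1 - s := fun s hs => by
      have := hs.2; linarith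
    have hspos : ∀ s ∈ Set.Icc r ρ, (0:ℝ) < s := fun s hs => lt_of_lt_of_le hr0 hs.1
    have c1 : ContinuousOn (fun s : ℝ => 1 - s) (Set.Icc r ρ) :=
      continuousOn_const.sub continuousOn_id
    have c2 : ContinuousOn (fun s : ℝ => (1 - s) ^ (b - β)) (Set.Icc r ρ) :=
      (contOn_rpow (b - β) (s := Set.Ioi 0) (fun x hx => hx)).comp c1
        (fun s hs => Set.mem_Ioi.mpr (h1s s hs))
    have c3 : ContinuousOn (fun s : ℝ => 1 / (1 - s) ^ b) (Set.Icc r ρ) :=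
      (contOn_osc b (s := Set.Ioi 0) (fun x hx => hx)).comp c1
        (fun s hs => Set.mem_Ioi.mpr (h1s s hs))
    refine ContinuousOn.congr
      (f := fun s : ℝ => (1 / (s * (1 - s) ^ (b - β))) * Real.sin (1 / (1 - s) ^ b)) ?_ ?_
    · refine (continuousOn_const.div (continuousOn_id.mul c2) ?_).mul
        (Real.continuous_sin.comp_continuousOn c3)
      intro s hs
      exact (mul_pos (hspos s hs) (Real.rpow_pos_of_pos (h1s s hs) _)).ne'
    · intro s hs
      simp only [hGdef]
      exact if_neg (not_lt.mpr (le_trans h12 hs.1))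
  have hpolar : ∫ ξ in Bzz z ζ, fEx b β ξ = Δ * ∫ s in r..ρ, s * G s := by
    simp_rw [hfEx, hBzz]
    rw [integral_radial_polarRect_rotate, integral_radial_polarRect G hr0 hρ1 hΔ0 hΔπ hGcont]
  have hcong : ∫ s in r..ρ, s * G s
      = ∫ s in r..ρ, Real.sin (1 / (1 - s) ^ b) * (1 - s) ^ (β - b) := by
    refine intervalIntegral.integral_congr (fun s hs => ?_)
    rw [Set.uIcc_of_le hρ1] at hs
    have hs2 : ¬ s < 1 / 2 := not_lt.mpr (le_trans h12 hs.1)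
    have h1s : (0:ℝ) < 1 - s := by have := hs.2; linarith
    have hspos : (0:ℝ) < s := lt_of_lt_of_le hr0 hs.1
    simp only [hGdef, if_neg hs2]
    rw [show β - b = -(b - β) by ring, Real.rpow_neg h1s.le]
    have hne : (1 - s) ^ (b - β) ≠ 0 := (Real.rpow_pos_of_pos h1s _).ne'
    field_simp
  have hsub : ∫ s in r..ρ, Real.sin (1 / (1 - s) ^ b) * (1 - s) ^ (β - b)
      = ∫ t in (1 - ρ)..(1 - r), Real.sin (1 / t ^ b) * t ^ (β - b) := by
    have := intervalIntegral.integral_comp_sub_left (a := r) (b := ρ)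
      (fun t => Real.sin (1 / t ^ b) * t ^ (β - b)) 1
    simpa using this
  have hIabs : |∫ t in (1 - ρ)..(1 - r), Real.sin (1 / t ^ b) * t ^ (β - b)|
      ≤ ((β + 3) / b) * (1 - r) ^ (β + 1) :=
    oscillatory_bound b β hb hβ (by linarith) (by linarith)
  rw [hdA, hpolar, hcong, hsub, abs_mul, abs_mul,
    abs_of_nonneg (inv_nonneg.mpr Real.pi_pos.le), abs_of_nonneg hΔ0]
  have hstep : Δ * |∫ t in (1 - ρ)..(1 - r), Real.sin (1 / t ^ b) * t ^ (β - b)|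
      ≤ (Real.pi * (1 - r)) * (((β + 3) / b) * (1 - r) ^ (β + 1)) :=
    mul_le_mul hΔle hIabs (abs_nonneg _) (by nlinarith)
  have h1r : (0:ℝ) < 1 - r := by linarith
  calc Real.pi⁻¹ * (Δ * |∫ t in (1 - ρ)..(1 - r), Real.sin (1 / t ^ b) * t ^ (β - b)|)
      ≤ Real.pi⁻¹ * ((Real.pi * (1 - r)) * (((β + 3) / b) * (1 - r) ^ (β + 1))) :=
        mul_le_mul_of_nonneg_left hstep (inv_nonneg.mpr Real.pi_pos.le)
    _ = ((β + 3) / b) * ((1 - r) * (1 - r) ^ (β + 1)) := by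
        field_simp
    _ = ((β + 3) / b) * (1 - r) ^ (2 + β) := by
        rw [show (2 + β : ℝ) = 1 + (β + 1) by ring]
        simp only [Real.rpow_add h1r, Real.rpow_one]
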